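/- The number 208 is 2-untouchable: 208 is in the range of s, but there is no positive integer m with s(s(m)) = 208. -/
import Mathlib

open Finset

/-- Sum of proper divisors. -/
def s (n : ℕ) : ℕ := ArithmeticFunction.sigma 1 n - n

/-- Divisor sum computed by summing over divisors up to `B`, pairing `d` with `n/d`. -/
def sigB (B n : ℕ) : ℕ :=
  ∑ i ∈ Finset.range B,
    (if (i + 1) ∣ n ∧ (i + 1) * (i + 1) ≤ n then
      ((i + 1) + if (i + 1) * (i + 1) = n then 0 else n / (i + 1)) else 0)

/-- Fast version of `s` given a bound `B` with `n ≤ B * B`. -/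
def sB (B n : ℕ) : ℕ := sigB B n - n

lemma sigma_one (n : ℕ) : ArithmeticFunction.sigma 1 n = ∑ d ∈ n.divisors, d :=
  ArithmeticFunction.sigma_one_apply n

lemma sigB_eq {B n : ℕ} (hn : n ≠ 0) (hB : n ≤ B * B) :
    sigB B n = ∑ d ∈ n.divisors, d := by
  classical
  set A : Finset ℕ := n.divisors.filter (fun d => d * d ≤ n) with hA
  set A' : Finset ℕ := n.divisors.filter (fun d => d * d < n) with hA'
  set Bg : Finset ℕ := n.divisors.filter (fun d => ¬ d * d ≤ n) with hBg
  set E : Finset ℕ := n.divisors.filter (fun d => d * d = n) with hE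
  have memA : ∀ d, d ∈ A ↔ d ∣ n ∧ d * d ≤ n := by
    intro d; rw [hA, Finset.mem_filter, Nat.mem_divisors]
    exact ⟨fun ⟨⟨h1, _⟩, h2⟩ => ⟨h1, h2⟩, fun ⟨h1, h2⟩ => ⟨⟨h1, hn⟩, h2⟩⟩
  have memA' : ∀ d, d ∈ A' ↔ d ∣ n ∧ d * d < n := by
    intro d; rw [hA', Finset.mem_filter, Nat.mem_divisors]
    exact ⟨fun ⟨⟨h1, _⟩, h2⟩ => ⟨h1, h2⟩, fun ⟨h1, h2⟩ => ⟨⟨h1, hn⟩, h2⟩⟩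
  have memB : ∀ d, d ∈ Bg ↔ d ∣ n ∧ n < d * d := by
    intro d; rw [hBg, Finset.mem_filter, Nat.mem_divisors]
    exact ⟨fun ⟨⟨h1, _⟩, h2⟩ => ⟨h1, by omega⟩, fun ⟨h1, h2⟩ => ⟨⟨h1, hn⟩, by omega⟩⟩
  -- step 1 : sigB B n = ∑ d ∈ A, (d + correction)
  have h1 : sigB B n = ∑ d ∈ A, (d + if d * d = n then 0 else n / d) := by
    rw [sigB, ← Finset.sum_filter]
    refine Finset.sum_nbij' (fun i => i + 1) (fun d => d - 1) ?_ ?_ ?_ ?_ ?_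
    · intro i hi
      simp only [Finset.mem_filter, Finset.mem_range] at hi
      rw [memA (i + 1)]
      exact hi.2
    · intro d hd
      rw [memA d] at hd
      have hd1 : 1 ≤ d := Nat.pos_of_dvd_of_pos hd.1 (Nat.pos_of_ne_zero hn)
      have hdB : d ≤ B := by nlinarith [hd.2]
      simp only [Finset.mem_filter, Finset.mem_range]
      constructor
      · omega
      · show (d - 1 + 1) ∣ n ∧ (d - 1 + 1) * (d - 1 + 1) ≤ n
        rw [Nat.sub_add_cancel hd1]
        exact hd
    · intro i _
      show i + 1 - 1 = i
      omega
    · intro d hd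
      rw [memA d] at hd
      have hd1 : 1 ≤ d := Nat.pos_of_dvd_of_pos hd.1 (Nat.pos_of_ne_zero hn)
      show d - 1 + 1 = d
      omega
    · intro i _; rfl
  -- split A into A' and E
  have e1 : A.filter (fun d => d * d < n) = A' := by
    ext d
    rw [Finset.mem_filter, memA d, memA' d]
    exact ⟨fun ⟨⟨h1, _⟩, h3⟩ => ⟨h1, h3⟩, fun ⟨h1, h3⟩ => ⟨⟨h1, Nat.le_of_lt h3⟩, h3⟩⟩
  have e2 : A.filter (fun d => ¬ d * d < n) = E := by
    ext d
    rw [Finset.mem_filter, memA d, hE, Finset.mem_filter, Nat.mem_divisors]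
    exact ⟨fun ⟨⟨h1, h2⟩, h3⟩ => ⟨⟨h1, hn⟩, by omega⟩,
      fun ⟨⟨h1, _⟩, h3⟩ => ⟨⟨h1, by omega⟩, by omega⟩⟩
  -- step 2 : the ite-sum over A equals ∑ d ∈ A', n / d
  have h2 : (∑ d ∈ A, (if d * d = n then 0 else n / d)) = ∑ d ∈ A', (n / d) := by
    rw [← Finset.sum_filter_add_sum_filter_not A (fun d => d * d < n), e1, e2]
    have hE0 : (∑ d ∈ E, (if d * d = n then 0 else n / d)) = 0 := by
      refine Finset.sum_eq_zero ?_
      intro d hd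
      rw [hE, Finset.mem_filter] at hd
      rw [if_pos hd.2]
    have hA'c : (∑ d ∈ A', (if d * d = n then 0 else n / d)) = ∑ d ∈ A', (n / d) := by
      refine Finset.sum_congr rfl ?_
      intro d hd
      rw [memA' d] at hd
      rw [if_neg (by omega)]
    rw [hE0, hA'c, Nat.add_zero]
  -- step 3 : ∑ d ∈ A', n / d = ∑ d ∈ Bg, d
  have h3 : ∑ d ∈ A', (n / d) = ∑ d ∈ Bg, d := by
    refine Finset.sum_nbij' (fun d => n / d) (fun e => n / e) ?_ ?_ ?_ ?_ ?_
    · intro d hd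
      rw [memA' d] at hd
      obtain ⟨hdvd, hlt⟩ := hd
      have hdpos : 0 < d := Nat.pos_of_dvd_of_pos hdvd (Nat.pos_of_ne_zero hn)
      have hmul : d * (n / d) = n := Nat.mul_div_cancel' hdvd
      rw [memB]
      refine ⟨Nat.div_dvd_of_dvd hdvd, ?_⟩
      have hdlt : d < n / d := by
        by_contra hcon
        push_neg at hcon
        have : d * (n / d) ≤ d * d := Nat.mul_le_mul_left d hcon
        omega
      calc n = d * (n / d) := hmul.symm
        _ < (n / d) * (n / d) := by
            exact Nat.mul_lt_mul_of_lt_of_le hdlt (le_refl _) (by omega)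
    · intro e he
      rw [memB] at he
      obtain ⟨hdvd, hlt⟩ := he
      have hepos : 0 < e := Nat.pos_of_dvd_of_pos hdvd (Nat.pos_of_ne_zero hn)
      have hmul : e * (n / e) = n := Nat.mul_div_cancel' hdvd
      rw [memA']
      refine ⟨Nat.div_dvd_of_dvd hdvd, ?_⟩
      have hel : n / e < e := by
        by_contra hcon
        push_neg at hcon
        have : e * e ≤ e * (n / e) := Nat.mul_le_mul_left e hcon
        omega
      have hne0 : 0 < n / e := by
        rcases Nat.eq_zero_or_pos (n / e) with h | h
        · exfalso; rw [h, Nat.mul_zero] at hmul; exact hn hmul.symm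
        · exact h
      calc (n / e) * (n / e) < (n / e) * e :=
            Nat.mul_lt_mul_of_le_of_lt (le_refl _) hel hne0
        _ = n := by rw [Nat.mul_comm]; exact hmul
    · intro d hd
      rw [memA' d] at hd
      exact Nat.div_div_self hd.1 hn
    · intro e he
      rw [memB] at he
      exact Nat.div_div_self he.1 hn
    · intro d _; rfl
  -- step 4 : recombine
  have h4 : (∑ d ∈ A, d) + ∑ d ∈ Bg, d = ∑ d ∈ n.divisors, d :=
    Finset.sum_filter_add_sum_filter_not n.divisors (fun d => d * d ≤ n) _
  rw [h1, Finset.sum_add_distrib, h2, h3, h4]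

lemma sigma_ge_self {n : ℕ} (hn : n ≠ 0) : n ≤ ArithmeticFunction.sigma 1 n := by
  rw [sigma_one]
  exact Finset.single_le_sum (f := fun d => d) (fun _ _ => Nat.zero_le _)
    (Nat.mem_divisors_self n hn)

lemma s_eq_sB {B n : ℕ} (hn : n ≠ 0) (hB : n ≤ B * B) : s n = sB B n := by
  rw [s, sB, sigma_one, sigB_eq hn hB]

lemma sigma_eq_add {n v : ℕ} (hn : n ≠ 0) (h : s n = v) :
    ArithmeticFunction.sigma 1 n = n + v := by
  have := sigma_ge_self hn
  rw [s] at h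
  omega

lemma s_zero : s 0 = 0 := by decide

lemma s_one : s 1 = 0 := by decide

lemma s_prime {p : ℕ} (hp : p.Prime) : s p = 1 := by
  rw [s, sigma_one, Nat.sum_divisors_eq_sum_properDivisors_add_self,
    Nat.Prime.sum_properDivisors hp]
  omega

lemma s_prime_sq {p : ℕ} (hp : p.Prime) : s (p * p) = p + 1 := by
  have h2 : p * p = p ^ 2 := by ring
  rw [s, sigma_one, h2, Nat.divisors_prime_pow hp 2]
  rw [Finset.sum_map]
  simp only [Function.Embedding.coeFn_mk]
  rw [Finset.sum_range_succ, Finset.sum_range_succ, Finset.sum_range_one]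
  have hp2 : 2 ≤ p := hp.two_le
  simp only [pow_zero, pow_one, pow_two]
  omega

/-- Bound for even numbers: if `n` is even and at least 6, then `s n ≥ n/2 + 3`. -/
lemma even_bound {n : ℕ} (he : 2 ∣ n) (h6 : 6 ≤ n) : n / 2 + 3 ≤ s n := by
  have hn : n ≠ 0 := by omega
  have hsub : ({1, 2, n / 2, n} : Finset ℕ) ⊆ n.divisors := by
    simp only [Finset.insert_subset_iff, Finset.singleton_subset_iff, Nat.mem_divisors]
    exact ⟨⟨one_dvd n, hn⟩, ⟨he, hn⟩, ⟨Nat.div_dvd_of_dvd he, hn⟩, ⟨dvd_refl n, hn⟩⟩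
  have hd2 : n / 2 ≥ 3 := by omega
  have hd2n : n / 2 < n := by omega
  have hsum : (∑ d ∈ ({1, 2, n / 2, n} : Finset ℕ), d) = 1 + 2 + n / 2 + n := by
    rw [Finset.sum_insert (by simp only [Finset.mem_insert, Finset.mem_singleton]; omega),
      Finset.sum_insert (by simp only [Finset.mem_insert, Finset.mem_singleton]; omega),
      Finset.sum_insert (by simp only [Finset.mem_singleton]; omega),
      Finset.sum_singleton]
    omega
  have hle : (∑ d ∈ ({1, 2, n / 2, n} : Finset ℕ), d) ≤ ∑ d ∈ n.divisors, d :=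
    Finset.sum_le_sum_of_subset hsub
  have hle2 : 1 + 2 + n / 2 + n ≤ ArithmeticFunction.sigma 1 n := by
    rw [sigma_one]
    omega
  rw [s]
  omega

/-- Bound for squares of composite numbers. -/
lemma sq_bound {q : ℕ} (h2 : 2 ≤ q) (hq : ¬ q.Prime) : 3 * q + 1 ≤ s (q * q) := by
  set p := q.minFac with hp
  have hpd : p ∣ q := Nat.minFac_dvd q
  have hp2 : 2 ≤ p := (Nat.minFac_prime (by omega)).two_le
  have hpsq : p * p ≤ q := by
    have := Nat.minFac_sq_le_self (by omega : 0 < q) hq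
    rwa [pow_two] at this
  set t := q / p with ht
  have htq : p * t = q := Nat.mul_div_cancel' hpd
  have ht2 : 2 ≤ t := by nlinarith
  have htltq : t < q := by nlinarith
  have hq4 : 4 ≤ q := by nlinarith
  have hn : q * q ≠ 0 := by positivity
  have hsub : ({1, q, t * q, q * q} : Finset ℕ) ⊆ (q * q).divisors := by
    simp only [Finset.insert_subset_iff, Finset.singleton_subset_iff, Nat.mem_divisors]
    refine ⟨⟨one_dvd _, hn⟩, ⟨dvd_mul_right _ _, hn⟩, ⟨⟨p, ?_⟩, hn⟩, ⟨dvd_refl _, hn⟩⟩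
    rw [Nat.mul_assoc, Nat.mul_comm q p, ← Nat.mul_assoc, Nat.mul_comm t p, htq]
  have h1q : 1 < q := by omega
  have hqtq : q < t * q := by nlinarith
  have htqqq : t * q < q * q := by nlinarith
  have hsum : (∑ d ∈ ({1, q, t * q, q * q} : Finset ℕ), d) = 1 + q + t * q + q * q := by
    rw [Finset.sum_insert (by simp only [Finset.mem_insert, Finset.mem_singleton]; omega),
      Finset.sum_insert (by simp only [Finset.mem_insert, Finset.mem_singleton]; omega),
      Finset.sum_insert (by simp only [Finset.mem_singleton]; omega),
      Finset.sum_singleton]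
    omega
  have hle : (∑ d ∈ ({1, q, t * q, q * q} : Finset ℕ), d) ≤ ∑ d ∈ (q * q).divisors, d :=
    Finset.sum_le_sum_of_subset hsub
  have h3 : 3 * q + 1 ≤ 1 + q + t * q := by nlinarith
  have hle2 : 1 + q + t * q + q * q ≤ ArithmeticFunction.sigma 1 (q * q) := by
    rw [sigma_one]
    omega
  have hfin : 3 * q + 1 + q * q ≤ ArithmeticFunction.sigma 1 (q * q) := by omega
  rw [s]
  exact Nat.le_sub_of_add_le hfin

/-- Parity: odd non-square has even divisor sum. -/
lemma odd_square {n : ℕ} (hodd : ¬ 2 ∣ n) (hn1 : 1 < n) (heven : 2 ∣ s n) :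
    ∃ q, n = q * q := by
  by_contra hcon
  push_neg at hcon
  have hn : n ≠ 0 := by omega
  -- every divisor of n is odd
  have hdo : ∀ d ∈ n.divisors, ((d : ZMod 2) = 1) := by
    intro d hd
    rw [Nat.mem_divisors] at hd
    have : ¬ 2 ∣ d := fun h => hodd (h.trans hd.1)
    have hd2 : d % 2 = 1 := by omega
    have : ((d % 2 : ℕ) : ZMod 2) = ((d : ℕ) : ZMod 2) := ZMod.natCast_mod d 2
    rw [hd2] at this
    rw [← this]
    norm_num
  have hsum : ((∑ d ∈ n.divisors, d : ℕ) : ZMod 2) = 0 := by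
    push_cast
    refine Finset.sum_involution (fun d _ => n / d) ?_ ?_ ?_ ?_
    · intro d hd
      have h1 : ((d : ZMod 2)) = 1 := hdo d hd
      have hdvd : d ∣ n := Nat.dvd_of_mem_divisors hd
      have hmem : n / d ∈ n.divisors :=
        Nat.mem_divisors.mpr ⟨Nat.div_dvd_of_dvd hdvd, hn⟩
      have h2 : ((n / d : ℕ) : ZMod 2) = 1 := hdo _ hmem
      rw [h1, h2]; decide
    · intro d hd _
      intro heq
      have heq' : n / d = d := heq
      have hdvd : d ∣ n := Nat.dvd_of_mem_divisors hd
      have : d * (n / d) = n := Nat.mul_div_cancel' hdvd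
      rw [heq'] at this
      exact hcon d this.symm
    · intro d hd
      exact Nat.mem_divisors.mpr ⟨Nat.div_dvd_of_dvd (Nat.dvd_of_mem_divisors hd), hn⟩
    · intro d hd
      exact Nat.div_div_self (Nat.dvd_of_mem_divisors hd) hn
  -- but sigma n = n + s n is odd
  have hsig : ArithmeticFunction.sigma 1 n = n + s n := by
    have := sigma_ge_self hn
    rw [s]
    omega
  have hodd2 : (ArithmeticFunction.sigma 1 n) % 2 = 1 := by omega
  rw [sigma_one] at hsig
  have : ((∑ d ∈ n.divisors, d : ℕ) : ZMod 2) = 1 := by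
    rw [← ZMod.natCast_mod]
    rw [sigma_one] at hodd2
    rw [hodd2]
    norm_num
  rw [hsum] at this
  exact absurd this (by decide)

set_option maxRecDepth 40000 in
lemma dec208 : ∀ k < 411, sB 21 k = 208 → k = 268 := by decide

set_option maxRecDepth 40000 in
lemma dec268 : ∀ k < 531, sB 24 k ≠ 268 := by decide

set_option maxRecDepth 40000 in
lemma decsq208 : ∀ q < 70, sB 69 (q * q) ≠ 208 := by decide

set_option maxRecDepth 40000 in
lemma decsq268 : ∀ q < 90, sB 89 (q * q) ≠ 268 := by decide

/-- If `s k = 208` then `k = 268`. -/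
lemma step_A {k : ℕ} (h : s k = 208) : k = 268 := by
  have hk0 : k ≠ 0 := by rintro rfl; rw [s_zero] at h; omega
  have hk1 : k ≠ 1 := by rintro rfl; rw [s_one] at h; omega
  by_cases hp : k.Prime
  · rw [s_prime hp] at h; omega
  by_cases he : 2 ∣ k
  · -- even composite
    by_cases h6 : 6 ≤ k
    · have hb := even_bound he h6
      have hk : k < 411 := by omega
      exact dec208 k hk (by rw [← s_eq_sB hk0 (by omega)]; exact h)
    · have hk2 : 2 ≤ k := by omega
      have hk5 : k ≤ 5 := by omega
      interval_cases k <;> revert h <;> decide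
  · -- odd composite
    exfalso
    have h2 : 2 ∣ s k := by rw [h]; norm_num
    obtain ⟨q, rfl⟩ := odd_square he (by omega) h2
    have hq1 : 2 ≤ q := by
      rcases Nat.lt_or_ge q 2 with hq | hq
      · interval_cases q <;> simp_all
      · exact hq
    by_cases hqp : q.Prime
    · rw [s_prime_sq hqp] at h
      have : q = 207 := by omega
      rw [this] at hqp
      exact absurd hqp (by norm_num)
    · have hb := sq_bound hq1 hqp
      have hq70 : q < 70 := by omega
      exact decsq208 q hq70 (by
        rw [← s_eq_sB (by positivity) (by nlinarith : q * q ≤ 69 * 69)]; exact h)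

/-- There is no `m` with `s m = 268`. -/
lemma step_B {m : ℕ} (h : s m = 268) : False := by
  have hm0 : m ≠ 0 := by rintro rfl; rw [s_zero] at h; omega
  have hm1 : m ≠ 1 := by rintro rfl; rw [s_one] at h; omega
  by_cases hp : m.Prime
  · rw [s_prime hp] at h; omega
  by_cases he : 2 ∣ m
  · by_cases h6 : 6 ≤ m
    · have hb := even_bound he h6
      have hm : m < 531 := by omega
      exact dec268 m hm (by rw [← s_eq_sB hm0 (by omega)]; exact h)
    · have hm2 : 2 ≤ m := by omega
      have hm5 : m ≤ 5 := by omega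
      interval_cases m <;> revert h <;> decide
  · have h2 : 2 ∣ s m := by rw [h]; norm_num
    obtain ⟨q, rfl⟩ := odd_square he (by omega) h2
    have hq1 : 2 ≤ q := by
      rcases Nat.lt_or_ge q 2 with hq | hq
      · interval_cases q <;> simp_all
      · exact hq
    by_cases hqp : q.Prime
    · rw [s_prime_sq hqp] at h
      have : q = 267 := by omega
      rw [this] at hqp
      exact absurd hqp (by norm_num)
    · have hb := sq_bound hq1 hqp
      have hq90 : q < 90 := by omega
      exact decsq268 q hq90 (by
        rw [← s_eq_sB (by positivity) (by nlinarith : q * q ≤ 89 * 89)]; exact h)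

theorem two_untouchable_208 :
    (∃ m : ℕ, 0 < m ∧ s m = 208) ∧ ¬ ∃ m : ℕ, 0 < m ∧ s (s m) = 208 := by
  constructor
  · refine ⟨268, by norm_num, ?_⟩
    rw [s_eq_sB (by norm_num : (268:ℕ) ≠ 0) (by norm_num : (268:ℕ) ≤ 17 * 17)]
    decide
  · rintro ⟨m, hm, h⟩
    have h268 : s m = 268 := step_A h
    exact step_B h268
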